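/- Let Ω ⊆ ℝⁿ be open, let ω ∈ A_∞, and let φ(x,t) = t^{p(x)} where p : Ω → [1,∞] is measurable and 1/p satisfies the log-Hölder decay condition. Then φ satisfies (A2)_ω. -/

import Mathlib

open MeasureTheory Metric Filter Set
open scoped ENNReal NNReal Topology

noncomputable section

/-- `ℝⁿ` with Lebesgue measure. -/
abbrev Rn (n : ℕ) : Type := EuclideanSpace ℝ (Fin n)

/-- The `ω`-measure of a set `E`, `ω(E) = ∫_E ω(x) dx`. -/
def wSet {n : ℕ} (ω : Rn n → ℝ≥0∞) (E : Set (Rn n)) : ℝ≥0∞ := ∫⁻ x in E, ω x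

/-- A weight: a measurable, a.e. positive and finite, locally integrable function. -/
def IsWeight {n : ℕ} (ω : Rn n → ℝ≥0∞) : Prop :=
  Measurable ω ∧ (∀ᵐ x ∂(volume : Measure (Rn n)), 0 < ω x ∧ ω x < ∞) ∧
    ∀ (z : Rn n) (r : ℝ), 0 < r → wSet ω (ball z r) ≠ ∞

/-- The Muckenhoupt class `A_q`, `1 < q < ∞`:
`sup_B |B|^{-q} ω(B) (∫_B ω^{-q'/q})^{q-1} < ∞` where `q'/q = 1/(q-1)`. -/
def MuckenhouptAq {n : ℕ} (q : ℝ) (ω : Rn n → ℝ≥0∞) : Prop :=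
  IsWeight ω ∧ ∃ C : ℝ≥0∞, C ≠ ∞ ∧ ∀ (z : Rn n) (r : ℝ), 0 < r →
    (volume (ball z r)) ^ (-q) * wSet ω (ball z r) *
      (∫⁻ y in ball z r, (ω y) ^ (-(1 / (q - 1)))) ^ (q - 1) ≤ C

/-- The class `A_∞ = ⋃_{1<q<∞} A_q`. -/
def MuckenhouptAinfty {n : ℕ} (ω : Rn n → ℝ≥0∞) : Prop :=
  ∃ q : ℝ, 1 < q ∧ MuckenhouptAq q ω

/-- `(aInc)_p`: `t ↦ φ(x,t)/t^p` is almost increasing, uniformly in a.e. `x ∈ Ω`. -/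
def AInc {n : ℕ} (Ω : Set (Rn n)) (φ : Rn n → ℝ≥0∞ → ℝ≥0∞) (p : ℝ) : Prop :=
  ∃ a : ℝ≥0, 1 ≤ a ∧ ∀ᵐ x ∂(volume : Measure (Rn n)), x ∈ Ω →
    ∀ s t : ℝ≥0, 0 < s → s < t →
      φ x s / (s : ℝ≥0∞) ^ p ≤ a * (φ x t / (t : ℝ≥0∞) ^ p)

/-- A weak Φ-function on `Ω`. -/
structure IsWeakPhi {n : ℕ} (Ω : Set (Rn n)) (φ : Rn n → ℝ≥0∞ → ℝ≥0∞) : Prop where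
  meas : ∀ f : Rn n → ℝ≥0∞, Measurable f → Measurable fun x => φ x (f x)
  mono : ∀ᵐ x ∂(volume : Measure (Rn n)), x ∈ Ω → Monotone (φ x)
  map_zero : ∀ᵐ x ∂(volume : Measure (Rn n)), x ∈ Ω → φ x 0 = 0
  tendsto_zero : ∀ᵐ x ∂(volume : Measure (Rn n)), x ∈ Ω →
    Tendsto (fun t : ℝ≥0 => φ x t) (𝓝[>] 0) (𝓝 0)
  tendsto_top : ∀ᵐ x ∂(volume : Measure (Rn n)), x ∈ Ω →
    Tendsto (fun t : ℝ≥0 => φ x t) atTop (𝓝 ∞)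
  aInc_one : AInc Ω φ 1

/-- Condition (A0). -/
def A0 {n : ℕ} (Ω : Set (Rn n)) (φ : Rn n → ℝ≥0∞ → ℝ≥0∞) : Prop :=
  ∃ β₀ : ℝ≥0, 0 < β₀ ∧ β₀ ≤ 1 ∧ ∀ᵐ x ∂(volume : Measure (Rn n)), x ∈ Ω →
    φ x β₀ ≤ 1 ∧ 1 ≤ φ x ((β₀ : ℝ≥0∞)⁻¹)

/-- Condition (A1)_ω. -/
def A1w {n : ℕ} (Ω : Set (Rn n)) (ω : Rn n → ℝ≥0∞) (φ : Rn n → ℝ≥0∞ → ℝ≥0∞) : Prop :=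
  ∃ β₁ : ℝ≥0, 0 < β₁ ∧ β₁ ≤ 1 ∧ ∀ (z : Rn n) (r : ℝ), 0 < r → wSet ω (ball z r) ≤ 1 →
    ∀ᵐ x ∂(volume : Measure (Rn n)), ∀ᵐ y ∂(volume : Measure (Rn n)),
      x ∈ ball z r ∩ Ω → y ∈ ball z r ∩ Ω →
        ∀ t : ℝ≥0, 1 ≤ φ y t → φ y t ≤ (wSet ω (ball z r))⁻¹ →
          φ x (β₁ * t) ≤ φ y t

/-- `h ∈ L¹(Ω,ω) ∩ L^∞(Ω)`, `h ≥ 0`. -/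
def MemL1wLinf {n : ℕ} (Ω : Set (Rn n)) (ω : Rn n → ℝ≥0∞) (h : Rn n → ℝ≥0) : Prop :=
  Measurable h ∧ (∫⁻ x in Ω, (h x : ℝ≥0∞) * ω x) ≠ ∞ ∧
    ∃ C : ℝ≥0, ∀ᵐ x ∂(volume : Measure (Rn n)), x ∈ Ω → h x ≤ C

/-- Condition (A2)_ω. -/
def A2w {n : ℕ} (Ω : Set (Rn n)) (ω : Rn n → ℝ≥0∞) (φ : Rn n → ℝ≥0∞ → ℝ≥0∞) : Prop :=
  ∀ s : ℝ≥0, 0 < s → ∃ β₂ : ℝ≥0, 0 < β₂ ∧ β₂ ≤ 1 ∧ ∃ h : Rn n → ℝ≥0,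
    MemL1wLinf Ω ω h ∧
      ∀ᵐ x ∂(volume : Measure (Rn n)), ∀ᵐ y ∂(volume : Measure (Rn n)),
        x ∈ Ω → y ∈ Ω → ∀ t : ℝ≥0, φ y t ≤ s →
          φ x (β₂ * t) ≤ φ y t + h x + h y

/-- The weighted modular `ρ_φ^ω(g) = ∫_Ω φ(x, g(x)) ω(x) dx` (applied to `g = |f|`). -/
def wModular {n : ℕ} (Ω : Set (Rn n)) (ω : Rn n → ℝ≥0∞) (φ : Rn n → ℝ≥0∞ → ℝ≥0∞)
    (g : Rn n → ℝ≥0∞) : ℝ≥0∞ := ∫⁻ x in Ω, φ x (g x) * ω x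

/-- The weighted Luxemburg norm `‖f‖_{L^φ(Ω,ω)}` (applied to `g = |f|`). -/
def wNorm {n : ℕ} (Ω : Set (Rn n)) (ω : Rn n → ℝ≥0∞) (φ : Rn n → ℝ≥0∞ → ℝ≥0∞)
    (g : Rn n → ℝ≥0∞) : ℝ≥0∞ :=
  ⨅ (lam : ℝ≥0) (_ : 0 < lam)
    (_ : wModular Ω ω φ (fun x => g x / lam) ≤ 1), (lam : ℝ≥0∞)

/-- Membership in the weighted generalized Orlicz space `L^φ(Ω,ω)` (applied to `g = |f|`). -/
def MemLw {n : ℕ} (Ω : Set (Rn n)) (ω : Rn n → ℝ≥0∞) (φ : Rn n → ℝ≥0∞ → ℝ≥0∞)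
    (g : Rn n → ℝ≥0∞) : Prop :=
  ∃ lam : ℝ≥0, 0 < lam ∧ wModular Ω ω φ (fun x => g x / lam) ≤ 1

/-- The Hardy–Littlewood maximal operator (relative to `Ω`), applied to `g = |f|`. -/
def maximal {n : ℕ} (Ω : Set (Rn n)) (g : Rn n → ℝ≥0∞) (x : Rn n) : ℝ≥0∞ :=
  ⨆ (z : Rn n) (r : ℝ) (_ : 0 < r) (_ : x ∈ ball z r),
    (volume (ball z r))⁻¹ * ∫⁻ y in ball z r ∩ Ω, g y

/-- An `x`-independent weak Φ-function. -/
structure IsWeakPhi0 (ψ : ℝ≥0∞ → ℝ≥0∞) : Prop where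
  mono : Monotone ψ
  map_zero : ψ 0 = 0
  tendsto_zero : Tendsto (fun t : ℝ≥0 => ψ t) (𝓝[>] 0) (𝓝 0)
  tendsto_top : Tendsto (fun t : ℝ≥0 => ψ t) atTop (𝓝 ∞)
  aInc_one : ∃ a : ℝ≥0, 1 ≤ a ∧ ∀ s t : ℝ≥0, 0 < s → s < t →
    ψ s / (s : ℝ≥0∞) ≤ a * (ψ t / (t : ℝ≥0∞))

/-- The real-valued reciprocal `1/p(x)` of an exponent `p : Ω → [1,∞]` (with `1/∞ = 0`). -/
def invExp {n : ℕ} (p : Rn n → ℝ≥0∞) (x : Rn n) : ℝ := ((p x)⁻¹).toReal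

/-- Local log-Hölder continuity of `g` on `Ω`. -/
def LocallyLogHolder {n : ℕ} (Ω : Set (Rn n)) (g : Rn n → ℝ) : Prop :=
  ∃ c : ℝ, 0 < c ∧ ∀ x ∈ Ω, ∀ y ∈ Ω,
    |g x - g y| ≤ c / Real.log (Real.exp 1 + 1 / dist x y)

/-- The log-Hölder decay condition for `g` with limit `g∞`. -/
def LogHolderDecay {n : ℕ} (Ω : Set (Rn n)) (g : Rn n → ℝ) (ginf : ℝ) : Prop :=
  ∃ c : ℝ, 0 < c ∧ ∀ x ∈ Ω, |g x - ginf| ≤ c / Real.log (Real.exp 1 + ‖x‖)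

/-- `1/p ∈ P^log(Ω)`: local log-Hölder continuity plus log-Hölder decay. -/
def PLog {n : ℕ} (Ω : Set (Rn n)) (p : Rn n → ℝ≥0∞) : Prop :=
  LocallyLogHolder Ω (invExp p) ∧
    ∃ pinf : ℝ≥0∞, 1 ≤ pinf ∧ LogHolderDecay Ω (invExp p) ((pinf)⁻¹).toReal

/-- The variable exponent Φ-function `φ(x,t) = t^{p(x)}`, with
`t^∞ := ∞·χ_{(1,∞)}(t)`. -/
def varExp {n : ℕ} (p : Rn n → ℝ≥0∞) (x : Rn n) (t : ℝ≥0∞) : ℝ≥0∞ :=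
  if p x = ∞ then (if t ≤ 1 then 0 else ∞) else t ^ (p x).toReal

/-- The double phase functional `φ(x,t) = t^p + a(x) t^q`. -/
def doublePhase {n : ℕ} (a : Rn n → ℝ) (p q : ℝ) (x : Rn n) (t : ℝ≥0∞) : ℝ≥0∞ :=
  t ^ p + ENNReal.ofReal (a x) * t ^ q

lemma aq_growth {n : ℕ} {ω : Rn n → ℝ≥0∞} {q : ℝ} (hq : 1 < q) (hω : MuckenhouptAq q ω) :
    ∃ C : ℝ≥0∞, C ≠ ∞ ∧ ∀ R : ℝ, 1 ≤ R →
      wSet ω (ball (0 : Rn n) R) ≤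
        C * ENNReal.ofReal (R ^ ((n : ℝ) * q)) * wSet ω (ball (0 : Rn n) 1) := by
  obtain ⟨⟨hmeas, hpos, hloc⟩, C, hC, hAq⟩ := hω
  refine ⟨C, hC, ?_⟩
  intro R hR
  have hR0 : (0 : ℝ) < R := lt_of_lt_of_le one_pos hR
  set B := ball (0 : Rn n) R with hBdef
  set E := ball (0 : Rn n) 1 with hEdef
  have hEB : E ⊆ B := ball_subset_ball hR
  have hq0 : (0 : ℝ) < q := lt_trans one_pos hq
  have hq0' : q ≠ 0 := hq0.ne'
  have hconj : q.HolderConjugate (q / (q - 1)) := Real.HolderConjugate.conjExponent hq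
  set q' : ℝ := q / (q - 1) with hq'def
  set σ : Rn n → ℝ≥0∞ := fun y => ω y ^ (-(1 / (q - 1))) with hσdef
  -- Hölder : volume E ≤ (wSet ω E)^(1/q) * (∫ σ over E)^(1/q')
  have hae : ∀ᵐ x ∂(volume : Measure (Rn n)).restrict E,
      (1 : ℝ≥0∞) = ω x ^ (1/q) * ω x ^ (-(1/q)) := by
    filter_upwards [ae_restrict_of_ae hpos] with x hx
    rw [← ENNReal.rpow_add _ _ hx.1.ne' hx.2.ne]
    norm_num
  have hH := ENNReal.lintegral_mul_le_Lp_mul_Lq ((volume : Measure (Rn n)).restrict E) hconj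
    (f := fun y => ω y ^ (1/q)) (g := fun y => ω y ^ (-(1/q)))
    (hmeas.pow_const _).aemeasurable (hmeas.pow_const _).aemeasurable
  have hvolE : volume E ≤ (wSet ω E) ^ (1/q) * (∫⁻ y in E, σ y) ^ (1/q') := by
    have h1 : volume E = ∫⁻ y in E, (fun y => ω y ^ (1/q)) y * (fun y => ω y ^ (-(1/q))) y := by
      rw [← lintegral_congr_ae hae, setLIntegral_one]
    rw [h1]
    refine le_trans hH ?_
    apply mul_le_mul'
    · apply le_of_eq; congr 1
      apply lintegral_congr; intro y
      rw [← ENNReal.rpow_mul, one_div_mul_cancel hq0', ENNReal.rpow_one]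
    · apply le_of_eq; congr 1
      apply lintegral_congr; intro y
      rw [← ENNReal.rpow_mul]
      congr 1
      field_simp [hq'def]
      rfl
  -- raise to the power q
  have hq1' : (0:ℝ) ≤ q - 1 := by linarith
  have h2 : (volume E) ^ q ≤ wSet ω E * (∫⁻ y in B, σ y) ^ (q - 1) := by
    have e1 : ((wSet ω E) ^ (1/q) * (∫⁻ y in E, σ y) ^ (1/q')) ^ q
        = wSet ω E * (∫⁻ y in E, σ y) ^ (q-1) := by
      rw [ENNReal.mul_rpow_of_nonneg _ _ hq0.le, ← ENNReal.rpow_mul, ← ENNReal.rpow_mul,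
        one_div_mul_cancel hq0', ENNReal.rpow_one]
      congr 2
      have hq1'' : q - 1 ≠ 0 := by intro h; rw [sub_eq_zero] at h; exact (lt_irrefl _ (h ▸ hq))
      field_simp [hq'def]
      rw [hq'def]; field_simp
    calc (volume E) ^ q ≤ ((wSet ω E) ^ (1/q) * (∫⁻ y in E, σ y) ^ (1/q')) ^ q :=
          ENNReal.rpow_le_rpow hvolE hq0.le
      _ = wSet ω E * (∫⁻ y in E, σ y) ^ (q-1) := e1
      _ ≤ wSet ω E * (∫⁻ y in B, σ y) ^ (q-1) := by
          exact mul_le_mul_right (ENNReal.rpow_le_rpow (lintegral_mono_set hEB) hq1') _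
  have hvB0 : volume B ≠ 0 := (measure_ball_pos volume _ hR0).ne'
  have hvBtop : volume B ≠ ∞ := measure_ball_lt_top.ne
  have hvE0 : volume E ≠ 0 := (measure_ball_pos volume _ one_pos).ne'
  have hvEtop : volume E ≠ ∞ := measure_ball_lt_top.ne
  have hAq0 := hAq 0 R hR0
  have hcancel : (volume B) ^ q * (volume B) ^ (-q) = 1 := by
    rw [← ENNReal.rpow_add _ _ hvB0 hvBtop]
    simp
  have key : wSet ω B * (volume E) ^ q ≤ wSet ω E * ((volume B) ^ q * C) := by
    calc wSet ω B * (volume E) ^ q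
        ≤ wSet ω B * (wSet ω E * (∫⁻ y in B, σ y) ^ (q-1)) := mul_le_mul_right h2 _
      _ = wSet ω E * ((volume B) ^ q *
            ((volume B) ^ (-q) * wSet ω B * (∫⁻ y in B, σ y) ^ (q-1))) := by
          rw [← mul_one (wSet ω B * (wSet ω E * (∫⁻ y in B, σ y) ^ (q-1))), ← hcancel]
          ring
      _ ≤ wSet ω E * ((volume B) ^ q * C) := by
          exact mul_le_mul_right (mul_le_mul_right hAq0 _) _
  -- scaling of the ball volume
  have hscale : volume B = ENNReal.ofReal R ^ ((n:ℝ)) * volume E := by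
    rw [hBdef, hEdef, MeasureTheory.Measure.addHaar_ball_of_pos volume _ hR0]
    congr 1
    rw [finrank_euclideanSpace_fin, ← Real.rpow_natCast R n,
      ← ENNReal.ofReal_rpow_of_pos hR0]
  have hvEq0 : (volume E) ^ q ≠ 0 := by
    simp [ENNReal.rpow_eq_zero_iff, hvE0, hvEtop]
  have hvEqtop : (volume E) ^ q ≠ ∞ := by
    simp [ENNReal.rpow_eq_top_iff, hvE0, hvEtop]
  have hpow : (volume B) ^ q = ENNReal.ofReal (R ^ ((n:ℝ) * q)) * (volume E) ^ q := by
    rw [hscale, ENNReal.mul_rpow_of_nonneg _ _ hq0.le, ← ENNReal.rpow_mul,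
      ← ENNReal.ofReal_rpow_of_pos hR0]
  refine (ENNReal.mul_le_mul_iff_left hvEq0 hvEqtop).mp ?_
  calc wSet ω B * (volume E) ^ q ≤ wSet ω E * ((volume B) ^ q * C) := key
    _ = C * ENNReal.ofReal (R ^ ((n : ℝ) * q)) * wSet ω E * (volume E) ^ q := by
        rw [hpow]; ring

lemma weight_decay_integrable {n : ℕ} {ω : Rn n → ℝ≥0∞} {q : ℝ} (hq : 1 < q)
    {C : ℝ≥0∞} (hC : C ≠ ∞)
    (hgrow : ∀ R : ℝ, 1 ≤ R → wSet ω (ball (0:Rn n) R) ≤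
      C * ENNReal.ofReal (R ^ ((n:ℝ)*q)) * wSet ω (ball (0:Rn n) 1))
    (hfin : wSet ω (ball (0:Rn n) 1) ≠ ∞) :
    (∫⁻ x, ENNReal.ofReal ((Real.exp 1 + ‖x‖) ^ (-((n:ℝ)*q+1))) * ω x) ≠ ∞ := by
  set γ : ℝ := (n:ℝ)*q + 1 with hγdef
  have hγ0 : 0 < γ := by positivity
  set f : Rn n → ℝ≥0∞ := fun x => ENNReal.ofReal ((Real.exp 1 + Real.sqrt 0) ^ (-γ)) with hfdef0
  clear hfdef0 f
  set S : ℕ → Set (Rn n) := fun k => ball 0 ((2:ℝ)^(k+1)) \ ball 0 ((2:ℝ)^k) with hSdef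
  have hbase : ∀ x : Rn n, (1:ℝ) ≤ Real.exp 1 + ‖x‖ := by
    intro x
    have := Real.one_le_exp (le_refl (0:ℝ))
    nlinarith [Real.exp_one_gt_d9, norm_nonneg x]
  have hcover : (univ : Set (Rn n)) ⊆ ball 0 1 ∪ ⋃ k, S k := by
    intro x _
    by_cases hx : ‖x‖ < 1
    · left; simpa [mem_ball_zero_iff] using hx
    · right
      push_neg at hx
      have hex : ∃ m : ℕ, ‖x‖ < 2^(m+1) := by
        obtain ⟨m, hm⟩ := pow_unbounded_of_one_lt ‖x‖ (by norm_num : (1:ℝ) < 2)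
        exact ⟨m, lt_of_lt_of_le hm (by apply pow_le_pow_right₀ (by norm_num); omega)⟩
      set k := Nat.find hex with hkdef
      have hk1 : ‖x‖ < 2^(k+1) := Nat.find_spec hex
      have hk2 : (2:ℝ)^k ≤ ‖x‖ := by
        rcases Nat.eq_zero_or_pos k with h0 | h0
        · rw [h0]; simpa using hx
        · have hmin := Nat.find_min hex (m := k - 1) (by omega)
          push_neg at hmin
          have hk' : k - 1 + 1 = k := by omega
          rwa [hk'] at hmin
      exact mem_iUnion.mpr ⟨k, by simp [hSdef, mem_ball_zero_iff, hk1, not_lt.mpr hk2,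
        mem_diff]⟩
  have hmain : (∫⁻ x, ENNReal.ofReal ((Real.exp 1 + ‖x‖) ^ (-γ)) * ω x) ≤
      wSet ω (ball (0:Rn n) 1) + ∑' k, ∫⁻ x in S k,
        ENNReal.ofReal ((Real.exp 1 + ‖x‖) ^ (-γ)) * ω x := by
    calc (∫⁻ x, ENNReal.ofReal ((Real.exp 1 + ‖x‖) ^ (-γ)) * ω x)
        = ∫⁻ x in (univ : Set (Rn n)), ENNReal.ofReal ((Real.exp 1 + ‖x‖) ^ (-γ)) * ω x := by
          rw [setLIntegral_univ]
      _ ≤ ∫⁻ x in (ball (0:Rn n) 1 ∪ ⋃ k, S k),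
            ENNReal.ofReal ((Real.exp 1 + ‖x‖) ^ (-γ)) * ω x := lintegral_mono_set hcover
      _ ≤ (∫⁻ x in ball (0:Rn n) 1, ENNReal.ofReal ((Real.exp 1 + ‖x‖) ^ (-γ)) * ω x)
            + ∫⁻ x in ⋃ k, S k, ENNReal.ofReal ((Real.exp 1 + ‖x‖) ^ (-γ)) * ω x :=
          lintegral_union_le _ _ _
      _ ≤ wSet ω (ball (0:Rn n) 1) + ∑' k, ∫⁻ x in S k,
            ENNReal.ofReal ((Real.exp 1 + ‖x‖) ^ (-γ)) * ω x := by
          apply add_le_add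
          · calc (∫⁻ x in ball (0:Rn n) 1, ENNReal.ofReal ((Real.exp 1 + ‖x‖) ^ (-γ)) * ω x)
                ≤ ∫⁻ x in ball (0:Rn n) 1, 1 * ω x := by
                  apply lintegral_mono
                  intro x
                  exact mul_le_mul_left (ENNReal.ofReal_le_one.mpr
                    (Real.rpow_le_one_of_one_le_of_nonpos (hbase x) (by linarith))) _
              _ = wSet ω (ball (0:Rn n) 1) := by simp [wSet]
          · exact lintegral_iUnion_le _ _
  -- bound each term
  have hterm : ∀ k : ℕ, (∫⁻ x in S k, ENNReal.ofReal ((Real.exp 1 + ‖x‖) ^ (-γ)) * ω x)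
      ≤ (C * wSet ω (ball (0:Rn n) 1) * ENNReal.ofReal ((2:ℝ) ^ ((n:ℝ)*q))) *
          ENNReal.ofReal ((2:ℝ) ^ (-(k:ℝ))) := by
    intro k
    have h2k : (0:ℝ) < 2^k := by positivity
    have hfk : ∀ x ∈ S k, ENNReal.ofReal ((Real.exp 1 + ‖x‖) ^ (-γ))
        ≤ ENNReal.ofReal (((2:ℝ)^k) ^ (-γ)) := by
      intro x hxS
      have hxk : (2:ℝ)^k ≤ ‖x‖ := by
        have := hxS.2
        simpa [mem_ball_zero_iff, not_lt] using this
      apply ENNReal.ofReal_le_ofReal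
      apply Real.rpow_le_rpow_of_nonpos h2k ?_ (by linarith)
      nlinarith [Real.exp_pos (1:ℝ), hxk]
    calc (∫⁻ x in S k, ENNReal.ofReal ((Real.exp 1 + ‖x‖) ^ (-γ)) * ω x)
        ≤ ∫⁻ x in S k, ENNReal.ofReal (((2:ℝ)^k) ^ (-γ)) * ω x := by
          apply setLIntegral_mono' (by
            apply MeasurableSet.diff <;> exact measurableSet_ball)
          intro x hx
          exact mul_le_mul_left (hfk x hx) _
      _ = ENNReal.ofReal (((2:ℝ)^k) ^ (-γ)) * ∫⁻ x in S k, ω x :=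
          lintegral_const_mul' _ _ ENNReal.ofReal_ne_top
      _ ≤ ENNReal.ofReal (((2:ℝ)^k) ^ (-γ)) * wSet ω (ball (0:Rn n) ((2:ℝ)^(k+1))) := by
          gcongr
          exact lintegral_mono_set diff_subset
      _ ≤ ENNReal.ofReal (((2:ℝ)^k) ^ (-γ)) *
            (C * ENNReal.ofReal (((2:ℝ)^(k+1)) ^ ((n:ℝ)*q)) * wSet ω (ball (0:Rn n) 1)) := by
          gcongr
          exact hgrow _ (one_le_pow₀ (by norm_num))
      _ = (C * wSet ω (ball (0:Rn n) 1) * ENNReal.ofReal ((2:ℝ) ^ ((n:ℝ)*q))) *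
            ENNReal.ofReal ((2:ℝ) ^ (-(k:ℝ))) := by
          have e1 : ((2:ℝ)^k) ^ (-γ) * ((2:ℝ)^(k+1)) ^ ((n:ℝ)*q)
              = (2:ℝ) ^ ((n:ℝ)*q) * (2:ℝ) ^ (-(k:ℝ)) := by
            rw [← Real.rpow_natCast (2:ℝ) k, ← Real.rpow_natCast (2:ℝ) (k+1),
              ← Real.rpow_mul (by norm_num), ← Real.rpow_mul (by norm_num),
              ← Real.rpow_add (by norm_num), ← Real.rpow_add (by norm_num)]
            congr 1
            push_cast [hγdef]
            ring
          have e0 : ENNReal.ofReal (((2:ℝ)^k) ^ (-γ)) *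
              ENNReal.ofReal (((2:ℝ)^(k+1)) ^ ((n:ℝ)*q))
              = ENNReal.ofReal ((2:ℝ) ^ ((n:ℝ)*q)) * ENNReal.ofReal ((2:ℝ) ^ (-(k:ℝ))) := by
            rw [← ENNReal.ofReal_mul (by positivity), e1, ENNReal.ofReal_mul (by positivity)]
          calc ENNReal.ofReal (((2:ℝ)^k) ^ (-γ)) *
                (C * ENNReal.ofReal (((2:ℝ)^(k+1)) ^ ((n:ℝ)*q)) * wSet ω (ball (0:Rn n) 1))
              = (ENNReal.ofReal (((2:ℝ)^k) ^ (-γ)) *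
                  ENNReal.ofReal (((2:ℝ)^(k+1)) ^ ((n:ℝ)*q))) * (C * wSet ω (ball (0:Rn n) 1)) := by
                ring
            _ = (C * wSet ω (ball (0:Rn n) 1) * ENNReal.ofReal ((2:ℝ) ^ ((n:ℝ)*q))) *
                  ENNReal.ofReal ((2:ℝ) ^ (-(k:ℝ))) := by rw [e0]; ring
  have hsum : (∑' k : ℕ, ENNReal.ofReal ((2:ℝ) ^ (-(k:ℝ)))) = ENNReal.ofReal 2 := by
    have e2 : ∀ k : ℕ, ENNReal.ofReal ((2:ℝ) ^ (-(k:ℝ))) = ENNReal.ofReal (((2:ℝ)⁻¹) ^ k) := by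
      intro k
      congr 1
      rw [Real.rpow_neg (by norm_num), Real.rpow_natCast, inv_pow]
    simp_rw [e2]
    rw [← ENNReal.ofReal_tsum_of_nonneg (fun k => by positivity)
      (summable_geometric_of_lt_one (by norm_num) (by norm_num))]
    congr 1
    exact tsum_geometric_inv_two
  intro htop
  apply hC
  have h2 : (∑' k, ∫⁻ x in S k, ENNReal.ofReal ((Real.exp 1 + ‖x‖) ^ (-γ)) * ω x)
      ≤ (C * wSet ω (ball (0:Rn n) 1) * ENNReal.ofReal ((2:ℝ) ^ ((n:ℝ)*q))) * ENNReal.ofReal 2 := by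
    rw [← hsum, ← ENNReal.tsum_mul_left]
    exact ENNReal.tsum_le_tsum hterm
  have : (∫⁻ x, ENNReal.ofReal ((Real.exp 1 + ‖x‖) ^ (-γ)) * ω x) ≠ ∞ := by
    apply ne_top_of_le_ne_top ?_ (hmain.trans (add_le_add_right h2 _))
    apply ENNReal.add_ne_top.mpr
    constructor
    · exact hfin
    · exact ENNReal.mul_ne_top (ENNReal.mul_ne_top (ENNReal.mul_ne_top hC hfin)
        ENNReal.ofReal_ne_top) ENNReal.ofReal_ne_top
  exact absurd htop this

lemma core1 {c γ A B L a : ℝ} (hc : 0 < c) (hγ : 0 < γ) (ha : 1 ≤ a)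
    (hA : 1 ≤ A) (hB : 1 ≤ B)
    (h1a : 1/a ≤ c/A + c/B) (hL : 2*c*γ ≤ L)
    (hAx : a*L < γ*A) (hBy : a*L < γ*B) : False := by
  have ha0 : 0 < a := by linarith
  have hL0 : 0 < L := by nlinarith
  have haL : 0 < a*L := by positivity
  have hA0 : 0 < A := by linarith
  have hB0 : 0 < B := by linarith
  have e1 : c/A < c*γ/(a*L) := by
    rw [div_lt_div_iff₀ hA0 haL]
    nlinarith
  have e2 : c/B < c*γ/(a*L) := by
    rw [div_lt_div_iff₀ hB0 haL]
    nlinarith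
  have e3 : 1/a < 2*(c*γ/(a*L)) := by linarith
  rw [div_lt_iff₀ ha0] at e3
  have : L < 2*c*γ := by
    have h4 : 2*(c*γ/(a*L))*a = 2*c*γ/L := by
      field_simp
    rw [h4, lt_div_iff₀ hL0] at e3
    nlinarith
  linarith

lemma core2 {c γ A B L ℓ a b : ℝ} (hc : 0 < c) (hγ : 0 < γ) (ha : 1 ≤ a) (hb : 1 ≤ b)
    (hA : 1 ≤ A) (hB : 1 ≤ B) (hl : 0 < ℓ) (hK : 2*c*γ + ℓ ≤ L)
    (hab : 1/a - 1/b ≤ c/A + c/B)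
    (hAx : a*L < γ*A) (hBy : a*L < γ*B) : b*ℓ ≤ a*L := by
  have ha0 : 0 < a := by linarith
  have hb0 : 0 < b := by linarith
  have hL0 : 0 < L := by nlinarith
  have haL : 0 < a*L := by positivity
  have hA0 : 0 < A := by linarith
  have hB0 : 0 < B := by linarith
  have e1 : c/A < c*γ/(a*L) := by
    rw [div_lt_div_iff₀ hA0 haL]; nlinarith
  have e2 : c/B < c*γ/(a*L) := by
    rw [div_lt_div_iff₀ hB0 haL]; nlinarith
  have e3 : 1/a - 2*(c*γ/(a*L)) < 1/b := by linarith
  have e4 : (L - 2*c*γ)/(a*L) < 1/b := by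
    have : (L - 2*c*γ)/(a*L) = 1/a - 2*(c*γ/(a*L)) := by
      field_simp
    linarith [this ▸ e3]
  rw [div_lt_div_iff₀ haL hb0] at e4
  -- e4 : (L - 2*c*γ) * b < a*L * 1
  nlinarith


lemma nn_rpow_coe (u : ℝ≥0) (a : ℝ) (hu : u ≠ 0) :
    ((u : ℝ≥0∞)) ^ a = ENNReal.ofReal ((u:ℝ) ^ a) := by
  rw [← ENNReal.coe_rpow_of_ne_zero hu, ← ENNReal.ofReal_coe_nnreal, NNReal.coe_rpow]

set_option maxHeartbeats 2000000 in
/-- The variable exponent functional satisfies (A2)_ω. -/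
theorem varExp_A2w
    (n : ℕ) (Ω : Set (Rn n)) (hΩ : IsOpen Ω)
    (ω : Rn n → ℝ≥0∞) (hω : MuckenhouptAinfty ω)
    (p : Rn n → ℝ≥0∞) (hpm : Measurable p) (hp1 : ∀ x ∈ Ω, 1 ≤ p x)
    (pinf : ℝ≥0∞) (hpinf : 1 ≤ pinf)
    (hdecay : LogHolderDecay Ω (invExp p) ((pinf)⁻¹).toReal) :
    A2w Ω ω (varExp p) := by
  classical
  obtain ⟨q, hq1, hAqfull⟩ := hω
  obtain ⟨C, hC, hgrow⟩ := aq_growth hq1 hAqfull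
  obtain ⟨hωmeas, hωpos, hωloc⟩ := hAqfull.1
  obtain ⟨c, hc, hdec⟩ := hdecay
  set qi : ℝ := (pinf⁻¹).toReal with hqidef
  set γ : ℝ := (n:ℝ)*q + 1 with hγdef
  have hq0 : (0:ℝ) < q := by linarith
  have hγ0 : 0 < γ := by positivity
  set h : Rn n → ℝ≥0 := fun z => Real.toNNReal ((Real.exp 1 + ‖z‖) ^ (-γ)) with hhdef
  have hcoe : ∀ z, (h z : ℝ≥0∞) = ENNReal.ofReal ((Real.exp 1 + ‖z‖) ^ (-γ)) := fun z => rfl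
  have hbase : ∀ z : Rn n, (1:ℝ) < Real.exp 1 + ‖z‖ := fun z => by
    nlinarith [Real.exp_one_gt_d9, norm_nonneg z]
  have hlog1 : ∀ z : Rn n, 1 ≤ Real.log (Real.exp 1 + ‖z‖) := by
    intro z
    calc (1:ℝ) = Real.log (Real.exp 1) := (Real.log_exp 1).symm
      _ ≤ Real.log (Real.exp 1 + ‖z‖) :=
        Real.log_le_log (Real.exp_pos 1) (le_add_of_nonneg_right (norm_nonneg z))
  intro s hs
  set T : ℝ≥0 := max s 1 with hTdef
  have hT1 : (1:ℝ≥0) ≤ T := le_max_right _ _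
  have hT0 : (0:ℝ) < (T:ℝ) := by exact_mod_cast lt_of_lt_of_le one_pos hT1
  set β : ℝ≥0 := Real.toNNReal (min ((T:ℝ))⁻¹ (Real.exp (-(2*c*γ)))) with hβdef
  have hβcoe : (β:ℝ) = min ((T:ℝ))⁻¹ (Real.exp (-(2*c*γ))) :=
    Real.coe_toNNReal _ (le_min (by positivity) (Real.exp_pos _).le)
  have hβR : (0:ℝ) < (β:ℝ) := by rw [hβcoe]; positivity
  have hβ0 : 0 < β := by exact_mod_cast hβR
  have hβT : (β:ℝ) ≤ (T:ℝ)⁻¹ := hβcoe ▸ min_le_left _ _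
  have hβe : (β:ℝ) ≤ Real.exp (-(2*c*γ)) := hβcoe ▸ min_le_right _ _
  have hβ1 : β ≤ 1 := by
    have h1 : (β:ℝ) ≤ 1 := hβe.trans (Real.exp_le_one_iff.mpr (by nlinarith))
    exact_mod_cast h1
  refine ⟨β, hβ0, hβ1, h, ⟨?_, ?_, 1, ?_⟩, ?_⟩
  · exact (((continuous_const.add continuous_norm).rpow_const
      (fun z => Or.inl (ne_of_gt (by linarith [hbase z]) : Real.exp 1 + ‖z‖ ≠ 0))).measurable).real_toNNReal
  · have hint := weight_decay_integrable hq1 hC hgrow (hωloc 0 1 one_pos)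
    refine ne_top_of_le_ne_top hint ?_
    calc ∫⁻ x in Ω, (h x : ℝ≥0∞) * ω x ≤ ∫⁻ x, (h x : ℝ≥0∞) * ω x :=
        setLIntegral_le_lintegral _ _
      _ = ∫⁻ x, ENNReal.ofReal ((Real.exp 1 + ‖x‖) ^ (-((n:ℝ)*q+1))) * ω x := by
        simp_rw [hcoe]
        rfl
  · exact Filter.Eventually.of_forall (fun z _ => Real.toNNReal_le_one.mpr
      (Real.rpow_le_one_of_one_le_of_nonpos (hbase z).le (by linarith)))
  · refine Filter.Eventually.of_forall ?_
    intro x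
    refine Filter.Eventually.of_forall ?_
    intro y hxΩ hyΩ t hts
    rw [← ENNReal.coe_mul]
    set u : ℝ≥0 := β * t with hudef
    have htT : t ≤ T := by
      by_cases hpy : p y = ∞
      · by_cases ht1 : t ≤ 1
        · exact ht1.trans hT1
        · exfalso
          have he : varExp p y ↑t = ∞ := by
            rw [varExp, if_pos hpy, if_neg (by exact_mod_cast ht1)]
          rw [he] at hts
          exact absurd hts (not_le.mpr ENNReal.coe_lt_top)
      · by_cases ht1 : t ≤ 1
        · exact ht1.trans hT1
        · push_neg at ht1
          have hb1 : 1 ≤ (p y).toReal := by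
            have := ENNReal.toReal_mono hpy (hp1 y hyΩ)
            simpa using this
          have h2 : (t:ℝ≥0∞) ≤ s := by
            calc (t:ℝ≥0∞) = (t:ℝ≥0∞) ^ (1:ℝ) := (ENNReal.rpow_one _).symm
              _ ≤ (t:ℝ≥0∞) ^ (p y).toReal :=
                  ENNReal.rpow_le_rpow_of_exponent_le (by exact_mod_cast ht1.le) hb1
              _ ≤ s := by rw [varExp, if_neg hpy] at hts; exact hts
          exact (ENNReal.coe_le_coe.mp h2).trans (le_max_left _ _)
    have hu1 : (u:ℝ) ≤ 1 := by
      calc (u:ℝ) = (β:ℝ) * t := by push_cast [hudef]; ring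
        _ ≤ (T:ℝ)⁻¹ * T := by
          apply mul_le_mul hβT (by exact_mod_cast htT) (by positivity) (by positivity)
        _ = 1 := inv_mul_cancel₀ hT0.ne'
    by_cases hpx : p x = ∞
    · rw [varExp, if_pos hpx, if_pos (show ((u:ℝ≥0∞)) ≤ 1 by
        rw [ENNReal.coe_le_one_iff]; exact_mod_cast hu1)]
      exact zero_le
    · rw [show varExp p x ↑u = (u:ℝ≥0∞) ^ (p x).toReal by rw [varExp, if_neg hpx]]
      set a : ℝ := (p x).toReal with hadef
      have ha1 : 1 ≤ a := by
        have := ENNReal.toReal_mono hpx (hp1 x hxΩ)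
        simpa using this
      by_cases hu0 : u = 0
      · rw [hu0]
        simp [ENNReal.zero_rpow_of_pos (show (0:ℝ) < a by linarith)]
      · have huR : 0 < (u:ℝ) := by positivity
        have ht0 : t ≠ 0 := by
          intro h0
          exact hu0 (by rw [hudef, h0, mul_zero])
        have htR : (0:ℝ) < (t:ℝ) := by positivity
        set A : ℝ := Real.log (Real.exp 1 + ‖x‖) with hAdef
        set B : ℝ := Real.log (Real.exp 1 + ‖y‖) with hBdef
        set L : ℝ := -Real.log (u:ℝ) with hLdef
        have hdx := hdec x hxΩ
        have hinvx : invExp p x = 1/a := by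
          rw [invExp, ENNReal.toReal_inv, one_div, hadef]
        have hKβ : 2*c*γ ≤ -Real.log (β:ℝ) := by
          have hlb := Real.log_le_log hβR hβe
          rw [Real.log_exp] at hlb
          linarith
        have hLsplit : L = -Real.log (β:ℝ) + -Real.log (t:ℝ) := by
          rw [hLdef, hudef, NNReal.coe_mul, Real.log_mul hβR.ne' htR.ne']
          ring
        by_cases hhx : (u:ℝ)^a ≤ (Real.exp 1 + ‖x‖)^(-γ)
        · have e : ((u:ℝ≥0∞))^a ≤ (h x : ℝ≥0∞) := by
            rw [nn_rpow_coe u a hu0, hcoe]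
            exact ENNReal.ofReal_le_ofReal hhx
          exact e.trans (le_trans le_add_self le_self_add)
        · by_cases hhy : (u:ℝ)^a ≤ (Real.exp 1 + ‖y‖)^(-γ)
          · have e : ((u:ℝ≥0∞))^a ≤ (h y : ℝ≥0∞) := by
              rw [nn_rpow_coe u a hu0, hcoe]
              exact ENNReal.ofReal_le_ofReal hhy
            exact e.trans le_add_self
          · push_neg at hhx hhy
            have hposx : (0:ℝ) < Real.exp 1 + ‖x‖ := by linarith [hbase x]
            have hposy : (0:ℝ) < Real.exp 1 + ‖y‖ := by linarith [hbase y]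
            have hExpu : (u:ℝ)^a = Real.exp (-(a*L)) := by
              rw [Real.rpow_def_of_pos huR]
              congr 1
              rw [hLdef]; ring
            have hAx : a*L < γ*A := by
              have hhx' := hhx
              rw [Real.rpow_def_of_pos hposx, hExpu] at hhx'
              have := Real.exp_lt_exp.mp hhx'
              rw [hAdef]; linarith [this]
            have hBy : a*L < γ*B := by
              have hhy' := hhy
              rw [Real.rpow_def_of_pos hposy, hExpu] at hhy'
              have := Real.exp_lt_exp.mp hhy'
              rw [hBdef]; linarith [this]
            by_cases hpy : p y = ∞
            · by_cases ht1 : (t:ℝ≥0∞) ≤ 1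
              · exfalso
                have hinvy : invExp p y = 0 := by simp [invExp, hpy]
                have hdy := hdec y hyΩ
                rw [hinvy] at hdy
                rw [hinvx] at hdx
                have l1 := abs_le.mp hdx
                have l2 := abs_le.mp hdy
                have h1a : 1/a ≤ c/A + c/B := by
                  rw [hAdef, hBdef]
                  have := l1.2
                  have := l2.1
                  rw [← hAdef, ← hBdef]
                  linarith [l1.2, l2.1]
                have hL2 : 2*c*γ ≤ L := by
                  have htlog : Real.log (t:ℝ) ≤ 0 :=
                    Real.log_nonpos htR.le (by exact_mod_cast ht1)
                  rw [hLsplit]; linarith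
                exact core1 hc hγ0 ha1 (hlog1 x) (hlog1 y) h1a hL2 hAx hBy
              · rw [varExp, if_pos hpy, if_neg ht1]
                simp
            · rw [show varExp p y ↑t = (t:ℝ≥0∞) ^ (p y).toReal by rw [varExp, if_neg hpy]]
              set b : ℝ := (p y).toReal with hbdef
              have hb1 : 1 ≤ b := by
                have := ENNReal.toReal_mono hpy (hp1 y hyΩ)
                simpa using this
              by_cases ht1 : 1 ≤ (t:ℝ)
              · have e1 : ((u:ℝ≥0∞))^a ≤ 1 := by
                  rw [nn_rpow_coe u a hu0]
                  exact ENNReal.ofReal_le_one.mpr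
                    (Real.rpow_le_one huR.le hu1 (by linarith))
                have e2 : (1:ℝ≥0∞) ≤ (t:ℝ≥0∞) ^ b := by
                  calc (1:ℝ≥0∞) = (t:ℝ≥0∞) ^ (0:ℝ) := by simp
                    _ ≤ (t:ℝ≥0∞) ^ b := ENNReal.rpow_le_rpow_of_exponent_le
                        (by exact_mod_cast ht1) (by linarith)
                exact le_trans (le_trans e1 e2) (le_trans le_self_add le_self_add)
              · push_neg at ht1
                set l : ℝ := -Real.log (t:ℝ) with hldef
                have hl0 : 0 < l := by
                  rw [hldef]
                  have := Real.log_neg htR ht1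
                  linarith
                have hK : 2*c*γ + l ≤ L := by
                  rw [hLsplit, hldef]; linarith
                have hinvy : invExp p y = 1/b := by
                  rw [invExp, ENNReal.toReal_inv, one_div, hbdef]
                have hdy := hdec y hyΩ
                rw [hinvy] at hdy
                rw [hinvx] at hdx
                have l1 := abs_le.mp hdx
                have l2 := abs_le.mp hdy
                have hab : 1/a - 1/b ≤ c/A + c/B := by
                  linarith [l1.2, l2.1]
                have hble := core2 hc hγ0 ha1 hb1 (hlog1 x) (hlog1 y) hl0 hK hab hAx hBy
                have hreal : (u:ℝ)^a ≤ (t:ℝ)^b := by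
                  rw [hExpu, Real.rpow_def_of_pos htR,
                    show Real.log (t:ℝ) * b = -(b*l) by rw [hldef]; ring]
                  exact Real.exp_le_exp.mpr (by linarith)
                calc ((u:ℝ≥0∞))^a = ENNReal.ofReal ((u:ℝ)^a) := nn_rpow_coe u a hu0
                  _ ≤ ENNReal.ofReal ((t:ℝ)^b) := ENNReal.ofReal_le_ofReal hreal
                  _ = (t:ℝ≥0∞) ^ b := (nn_rpow_coe t b ht0).symm
                  _ ≤ (t:ℝ≥0∞) ^ b + ↑(h x) + ↑(h y) := le_trans le_self_add le_self_add
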